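/- Let F be a group, R₀ a finitely generated subgroup of F, and R the normal closure of R₀ in F. Let K denote the image of R₀ ∩ [F,R] under the abelianization map R₀ → R₀ᵃᵇ = R₀/[R₀,R₀]. Then the rank of the finitely generated abelian group R/[F,R] equals rank(R₀ᵃᵇ) − rank(K). In particular, if R₀ᵃᵇ is free abelian of rank r and rank(K) = k, then rank(R/[F,R]) = r − k. -/

import Mathlib

/-- The (torsion-free) rank of a group `A`: the rank of the `ℤ`-module `Aᵃᵇ`
(for an abelian group `A` this is the usual rank `dim_ℚ (A ⊗_ℤ ℚ)`). -/
noncomputable def groupRank (A : Type*) [Group A] : ℕ :=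
  Module.finrank ℤ (Additive (Abelianization A))


lemma groupRank_congr {A B : Type*} [Group A] [Group B] (e : A ≃* B) :
    groupRank A = groupRank B :=
  (MulEquiv.toAdditive e.abelianizationCongr).toIntLinearEquiv.finrank_eq

lemma groupRank_comm (A : Type*) [CommGroup A] :
    groupRank A = Module.finrank ℤ (Additive A) :=
  ((MulEquiv.toAdditive (Abelianization.equivOfComm (H := A))).toIntLinearEquiv.finrank_eq).symm

lemma intModule_subsingleton (M : Type*) [AddCommGroup M] : Subsingleton (Module ℤ M) :=
  letI := AddCommGroup.uniqueIntModule (M := M); inferInstance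

/-- Rank-nullity for quotients of finitely generated abelian groups. -/
lemma groupRank_quotient {A : Type*} [CommGroup A] (K : Subgroup A)
    [Module.Finite ℤ (Additive A)] :
    groupRank (A ⧸ K) = groupRank A - groupRank ↥K := by
  classical
  let π : Additive A →ₗ[ℤ] Additive (A ⧸ K) :=
    (MonoidHom.toAdditive (QuotientGroup.mk' K)).toIntLinearMap
  have hπ : Function.Surjective π := fun y => by
    obtain ⟨x, hx⟩ := QuotientGroup.mk'_surjective K y.toMul
    exact ⟨Additive.ofMul x, congrArg Additive.ofMul hx⟩
  have hker : ∀ a : A, Additive.ofMul a ∈ LinearMap.ker π ↔ a ∈ K := by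
    intro a
    rw [LinearMap.mem_ker]
    change Additive.ofMul ((QuotientGroup.mk' K) a) = 0 ↔ _
    rw [show (0 : Additive (A ⧸ K)) = Additive.ofMul 1 from rfl]
    rw [Additive.ofMul.apply_eq_iff_eq]
    constructor
    · intro h; rw [← QuotientGroup.ker_mk' K]; exact h
    · intro h; exact (QuotientGroup.ker_mk' K ▸ h : _)
  -- equiv between `Additive K` and `ker π`
  let eK : Additive ↥K ≃+ ↥(LinearMap.ker π) :=
    { toFun := fun x => ⟨Additive.ofMul (x.toMul : A), (hker _).mpr x.toMul.2⟩
      invFun := fun y => Additive.ofMul (⟨Additive.toMul (y : Additive A), (hker _).mp y.2⟩ : ↥K)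
      left_inv := fun x => rfl
      right_inv := fun y => rfl
      map_add' := fun x y => rfl }
  have e1 : Module.finrank ℤ (Additive A ⧸ LinearMap.ker π)
      = Module.finrank ℤ (Additive (A ⧸ K)) := by
    have h := (LinearMap.quotKerEquivOfSurjective π hπ).finrank_eq
    convert h using 2
  have e2 := eK.toIntLinearEquiv.finrank_eq
  have h' : Module.finrank ℤ (Additive A ⧸ LinearMap.ker π)
      + Module.finrank ℤ ↥(LinearMap.ker π) = Module.finrank ℤ (Additive A) := by
    have h := Submodule.finrank_quotient_add_finrank (LinearMap.ker π)
    convert h using 2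
  rw [groupRank_comm (A ⧸ K), groupRank_comm A, groupRank_comm ↥K]
  omega

open scoped commutatorElement

/-- Let `F` be a group, `R₀` a finitely generated subgroup, `R` the normal closure of
`R₀` in `F` and `K` the image of `R₀ ∩ [F,R]` under the abelianization map `R₀ → R₀ᵃᵇ`.
Then `rank (R/[F,R]) = rank R₀ᵃᵇ - rank K`. -/
theorem rank_normalClosure_mod_commutator {F : Type*} [Group F] (R₀ : Subgroup F)
    (hfg : Group.FG ↥R₀) :
    groupRank (↥(Subgroup.normalClosure (R₀ : Set F)) ⧸
        (⁅(⊤ : Subgroup F), Subgroup.normalClosure (R₀ : Set F)⁆.subgroupOf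
          (Subgroup.normalClosure (R₀ : Set F)))) =
      groupRank ↥R₀ -
        groupRank ↥((⁅(⊤ : Subgroup F), Subgroup.normalClosure (R₀ : Set F)⁆.subgroupOf
          R₀).map (Abelianization.of (G := ↥R₀))) := by
  classical
  haveI := hfg
  set R := Subgroup.normalClosure (R₀ : Set F) with hR
  set N := ⁅(⊤ : Subgroup F), R⁆ with hN
  haveI : N.Normal := Subgroup.commutator_normal ⊤ R
  -- Step 1 : `R₀ ⊔ N = R`
  haveI hnorm : (R₀ ⊔ N).Normal := by
    constructor
    intro x hx g
    have hxR : x ∈ R :=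
      sup_le Subgroup.le_normalClosure (Subgroup.commutator_le_right ⊤ R) hx
    have hco : g * x * g⁻¹ = ⁅g, x⁆ * x := by group
    rw [hco]
    exact mul_mem
      (Subgroup.mem_sup_right (Subgroup.commutator_mem_commutator (Subgroup.mem_top g) hxR)) hx
  have hsup : R₀ ⊔ N = R := by
    apply le_antisymm
    · exact sup_le Subgroup.le_normalClosure (Subgroup.commutator_le_right ⊤ R)
    · exact Subgroup.normalClosure_le_normal
        (fun x hx => Subgroup.mem_sup_left hx)
  -- Step 2 : second isomorphism theorem
  have key : groupRank (↥R ⧸ N.subgroupOf R) = groupRank (↥R₀ ⧸ N.subgroupOf R₀) := by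
    have e1 := QuotientGroup.quotientInfEquivProdNormalQuotient R₀ N
    rw [hsup] at e1
    exact (groupRank_congr e1).symm
  rw [key]
  -- Step 3 : third isomorphism theorem
  have hcomm : commutator ↥R₀ ≤ N.subgroupOf R₀ := by
    rw [commutator_def, Subgroup.commutator_le]
    intro g hg h hh
    rw [Subgroup.mem_subgroupOf]
    show ⁅(g : F), (h : F)⁆ ∈ N
    exact Subgroup.commutator_mem_commutator (Subgroup.mem_top _)
      (Subgroup.le_normalClosure h.2)
  have e3 := QuotientGroup.quotientQuotientEquivQuotient (commutator ↥R₀)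
      (N.subgroupOf R₀) hcomm
  haveI : Group.FG (Abelianization ↥R₀) :=
    Group.fg_of_surjective (QuotientGroup.mk'_surjective (commutator ↥R₀))
  haveI : Module.Finite ℤ (Additive (Abelianization ↥R₀)) :=
    Module.Finite.iff_addGroup_fg.mpr inferInstance
  have step3 : groupRank (↥R₀ ⧸ N.subgroupOf R₀) =
      groupRank (Abelianization ↥R₀ ⧸ (N.subgroupOf R₀).map (Abelianization.of (G := ↥R₀))) :=
    (groupRank_congr e3).symm
  rw [step3, groupRank_quotient]
  congr 1
  exact (groupRank_comm (Abelianization ↥R₀)).trans rfl
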